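/- Let R be a ring with no non-trivial idempotents such that M_n(R) is nil-clean for some n ≥ 1. Then R is a local ring. -/

import Mathlib

/-- A ring is nil-clean if every element is the sum of an idempotent and a nilpotent. -/
def IsNilCleanRing (R : Type*) [Ring R] : Prop :=
  ∀ a : R, ∃ e q : R, IsIdempotentElem e ∧ IsNilpotent q ∧ a = e + q

/-- In a nil-clean ring every element is suitable (exchange property, left version). -/
lemma nilclean_suitable {S : Type*} [Ring S] (h : IsNilCleanRing S) (a : S) :
    ∃ f r s : S, IsIdempotentElem f ∧ f = r * a ∧ 1 - f = s * (1 - a) := by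
  obtain ⟨e, q, he, hq, hdec⟩ := h (a - 1)
  have hu : IsUnit (1 + q) := hq.isUnit_one_add
  obtain ⟨u, hu1⟩ := hu
  set v : S := ↑u⁻¹ with hv
  have hvu : v * (1 + q) = 1 := by rw [hv, hu1.symm] ; exact u.inv_mul
  have huv : (1 + q) * v = 1 := by rw [hv, hu1.symm] ; exact u.mul_inv
  have ha : a = e + (1 + q) := by
    have := hdec
    linear_combination (norm := noncomm_ring) this
  have hee : e * e = e := he
  have key1 : (1 - e) * (1 + q) = (1 - e) * a := by
    have h1 : (1 - e) * e = 0 := by noncomm_ring [hee]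
    calc (1 - e) * (1 + q) = (1 - e) * (a - e) := by rw [ha]; noncomm_ring
      _ = (1 - e) * a - (1 - e) * e := by noncomm_ring
      _ = (1 - e) * a := by rw [h1, sub_zero]
  have key2 : e * (1 + q) = -(e * (1 - a)) := by
    calc e * (1 + q) = e * (a - e) := by rw [ha]; noncomm_ring
      _ = e * a - e * e := by noncomm_ring
      _ = -(e * (1 - a)) := by rw [hee]; noncomm_ring
  refine ⟨v * (1 - e) * (1 + q), v * (1 - e), -(v * e), ?_, ?_, ?_⟩
  · show (v * (1 - e) * (1 + q)) * (v * (1 - e) * (1 + q)) = v * (1 - e) * (1 + q)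
    have h1 : (1 - e) * (1 - e) = 1 - e := by noncomm_ring [hee]
    calc (v * (1 - e) * (1 + q)) * (v * (1 - e) * (1 + q))
        = v * (1 - e) * ((1 + q) * v) * ((1 - e) * (1 + q)) := by noncomm_ring
      _ = v * ((1 - e) * (1 - e)) * (1 + q) := by rw [huv]; noncomm_ring
      _ = v * (1 - e) * (1 + q) := by rw [h1]
  · rw [mul_assoc, key1, mul_assoc]
  · calc 1 - v * (1 - e) * (1 + q) = v * (1 + q) - v * (1 - e) * (1 + q) := by rw [hvu]
      _ = v * (e * (1 + q)) := by noncomm_ring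
      _ = v * (-(e * (1 - a))) := by rw [key2]
      _ = -(v * e) * (1 - a) := by noncomm_ring

/-- Corner version of the exchange property. -/
lemma corner_suitable {S : Type*} [Ring S]
    (hS : ∀ a : S, ∃ f r s : S, IsIdempotentElem f ∧ f = r * a ∧ 1 - f = s * (1 - a))
    (e a : S) (he : IsIdempotentElem e) (hea : e * a = a) (hae : a * e = a) :
    ∃ h c d : S, IsIdempotentElem h ∧ h = (e * c * e) * a ∧ e - h = (e * d * e) * (e - a) := by
  have hee : e * e = e := he
  obtain ⟨f, r, s, hf, hfr, hfs⟩ := hS (a + 1 - e)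
  have hx : 1 - (a + 1 - e) = e - a := by noncomm_ring
  rw [hx] at hfs
  have h0 : (1 - f) * (1 - e) = 0 := by
    have : (e - a) * (1 - e) = 0 := by noncomm_ring [hee, hae]
    rw [hfs, mul_assoc, this, mul_zero]
  have hfe : f * e = e - 1 + f := by
    have h1 : (1 - f) * (1 - e) = 1 - e - f + f * e := by noncomm_ring
    rw [h1] at h0
    linear_combination (norm := noncomm_ring) h0
  have hff : f * f = f := hf
  refine ⟨e * f, r, s, ?_, ?_, ?_⟩
  · show (e * f) * (e * f) = e * f
    calc (e * f) * (e * f) = e * (f * e) * f := by noncomm_ring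
      _ = e * (e - 1 + f) * f := by rw [hfe]
      _ = e * e * f - e * f + e * (f * f) := by noncomm_ring
      _ = e * f := by rw [hee, hff]; noncomm_ring
  · have h1 : e * f = e * f * e := by
      calc e * f = e * (f * e) - e * (e - 1 + f) + e * f := by rw [hfe]; noncomm_ring
        _ = e * f * e - e * e + e - e * f + e * f := by noncomm_ring
        _ = e * f * e := by rw [hee]; noncomm_ring
    calc e * f = e * f * e := h1
      _ = e * (r * (a + 1 - e)) * e := by rw [hfr]
      _ = e * r * (a * e + e - e * e) := by noncomm_ring
      _ = e * r * a := by rw [hae, hee]; noncomm_ring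
      _ = e * r * (e * a) := by rw [hea]
      _ = (e * r * e) * a := by noncomm_ring
  · have h2 : e * (e - a) = e - a := by rw [mul_sub, hee, hea]
    calc e - e * f = e * (1 - f) := by noncomm_ring
      _ = e * (s * (e - a)) := by rw [hfs]
      _ = e * s * (e * (e - a)) := by rw [h2]; noncomm_ring
      _ = (e * s * e) * (e - a) := by noncomm_ring

theorem stmt5 (R : Type*) [Ring R]
    (hidem : ∀ e : R, IsIdempotentElem e → e = 0 ∨ e = 1)
    (n : ℕ) (hn : 1 ≤ n)
    (h : IsNilCleanRing (Matrix (Fin n) (Fin n) R)) :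
    ∀ a : R, IsUnit a ∨ IsUnit (1 - a) := by
  -- left invertible implies unit, given only trivial idempotents
  have leftinv : ∀ a b : R, b * a = 1 → IsUnit a := by
    intro a b hba
    have hab : IsIdempotentElem (a * b) := by
      show (a * b) * (a * b) = a * b
      calc (a * b) * (a * b) = a * (b * a) * b := by noncomm_ring
        _ = a * b := by rw [hba]; noncomm_ring
    rcases hidem _ hab with h0 | h1
    · have ha0 : a = 0 := by
        calc a = a * (b * a) := by rw [hba, mul_one]
          _ = (a * b) * a := by noncomm_ring
          _ = 0 := by rw [h0, zero_mul]
      have h10 : (0 : R) = 1 := by rw [← hba, ha0, mul_zero]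
      haveI := subsingleton_of_zero_eq_one h10
      exact isUnit_of_subsingleton a
    · exact ⟨⟨a, b, h1, hba⟩, rfl⟩
  intro a
  have i : Fin n := ⟨0, hn⟩
  have ιmul : ∀ x y : R,
      Matrix.single i i x * Matrix.single i i y
        = Matrix.single i i (x * y) := fun x y =>
    Matrix.single_mul_single_same x i i i y
  have ιinj : ∀ x y : R,
      Matrix.single i i x = Matrix.single i i y → x = y := by
    intro x y hxy
    have := congrArg (fun M => M i i) hxy
    simpa using this
  have ιsub : ∀ x y : R,
      Matrix.single i i x - Matrix.single i i y
        = Matrix.single i i (x - y) := by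
    intro x y
    ext j k
    simp only [Matrix.sub_apply, Matrix.single, Matrix.of_apply]
    split <;> simp
  set e : Matrix (Fin n) (Fin n) R := Matrix.single i i (1 : R) with hE
  have he : IsIdempotentElem e := by
    show e * e = e
    rw [hE, ιmul, one_mul]
  have hcorner : ∀ M : Matrix (Fin n) (Fin n) R,
      e * M * e = Matrix.single i i (M i i) := by
    intro M
    ext j k
    rw [hE]
    by_cases hj : j = i <;> by_cases hk : k = i
    · subst hj; subst hk; simp
    · subst hj
      rw [Matrix.mul_single_apply_of_ne _ _ _ _ _ hk,
        Matrix.single_apply_of_ne]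
      tauto
    · subst hk
      rw [mul_assoc, Matrix.single_mul_apply_of_ne _ _ _ _ _ hj,
        Matrix.single_apply_of_ne]
      tauto
    · rw [mul_assoc, Matrix.single_mul_apply_of_ne _ _ _ _ _ hj,
        Matrix.single_apply_of_ne]
      tauto
  have hea : e * Matrix.single i i a = Matrix.single i i a := by
    rw [hE, ιmul, one_mul]
  have hae : Matrix.single i i a * e = Matrix.single i i a := by
    rw [hE, ιmul, mul_one]
  obtain ⟨H, C, D, hH, hHC, hHD⟩ :=
    corner_suitable (nilclean_suitable h) e (Matrix.single i i a) he hea hae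
  rw [hcorner C] at hHC
  rw [hcorner D] at hHD
  set c : R := C i i with hc
  set d : R := D i i with hd
  rw [ιmul] at hHC
  have hca : IsIdempotentElem (c * a) := by
    apply ιinj
    show Matrix.single i i (c * a * (c * a)) = _
    rw [← ιmul, ← hHC]
    exact hH
  have heq : 1 - c * a = d * (1 - a) := by
    apply ιinj
    rw [← ιsub, ← hHC, ← hE]
    calc e - H = Matrix.single i i d * (e - Matrix.single i i a) := hHD
      _ = Matrix.single i i d * Matrix.single i i (1 - a) := by
          rw [hE, ιsub]
      _ = Matrix.single i i (d * (1 - a)) := ιmul _ _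
  rcases hidem _ hca with h0 | h1
  · right
    apply leftinv (1 - a) d
    rw [← heq, h0, sub_zero]
  · left
    exact leftinv a c h1
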